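/- arXiv:2101.03096 — 3 statements merged into one kernel-verified Lean document; each statement's English description precedes it below -/
import Mathlib

section
/- Fix T > 0, λ > 0, and z₀ ∈ [0, exp(1 - 2e^{λT})]. If z : [0,T] → [0,∞) is the unique solution of z_t = z₀ + λ ∫₀ᵗ γ(z_s) ds, then for every t ∈ [0,T] one has z_t ≤ e · z₀^{exp(-λ t)}. -/
open Real MeasureTheory Set intervalIntegral

/-- The concave Osgood modulus `γ`: `γ(r) = r(1 - log r)` for `0 < r < 1/e`,
`γ(r) = r + 1/e` for `r ≥ 1/e`, and `γ(0) = 0` (extended by `0` for `r ≤ 0`). -/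
noncomputable def gam (r : ℝ) : ℝ :=
  if r ≤ 0 then 0
  else if r < (Real.exp 1)⁻¹ then r * (1 - Real.log r)
  else r + (Real.exp 1)⁻¹

lemma gam_nonneg (r : ℝ) : 0 ≤ gam r := by
  unfold gam
  split_ifs with h1 h2
  · exact le_refl 0
  · push_neg at h1
    have hlog : Real.log r < Real.log (Real.exp 1)⁻¹ := Real.log_lt_log h1 h2
    rw [Real.log_inv, Real.log_exp] at hlog
    nlinarith
  · push_neg at h1 h2
    have : (0:ℝ) < (Real.exp 1)⁻¹ := by positivity
    linarith


lemma gam_key {r : ℝ} (hr : 0 < r) : r * (1 - Real.log r) ≤ r + (Real.exp 1)⁻¹ := by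
  have h := Real.log_le_sub_one_of_pos (x := (r * Real.exp 1)⁻¹) (by positivity)
  rw [Real.log_inv, Real.log_mul hr.ne' (Real.exp_ne_zero 1), Real.log_exp] at h
  have h2 : -Real.log r ≤ (r * Real.exp 1)⁻¹ := by linarith
  have h3 : r * (r * Real.exp 1)⁻¹ = (Real.exp 1)⁻¹ := by
    field_simp
  nlinarith [Real.exp_pos 1]

lemma curved {r s : ℝ} (hr : 0 < r) (hrs : r ≤ s) (hs : s ≤ (Real.exp 1)⁻¹) :
    r * (1 - Real.log r) ≤ s * (1 - Real.log s) := by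
  set f : ℝ → ℝ := fun x => x - x * Real.log x with hf
  have hd : ∀ x ∈ interior (Icc r s), HasDerivAt f (1 - (Real.log x + 1)) x := by
    intro x hx
    rw [interior_Icc] at hx
    exact (hasDerivAt_id x).sub (Real.hasDerivAt_mul_log (by nlinarith [hx.1]))
  have hmono : MonotoneOn f (Icc r s) := by
    apply monotoneOn_of_deriv_nonneg (convex_Icc r s)
    · apply ContinuousOn.sub continuousOn_id
      apply ContinuousOn.mul continuousOn_id
      apply Real.continuousOn_log.mono
      intro x hx
      simp only [mem_compl_iff, mem_singleton_iff]
      nlinarith [hx.1]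
    · intro x hx
      exact (hd x hx).differentiableAt.differentiableWithinAt
    · intro x hx
      rw [(hd x hx).deriv]
      rw [interior_Icc] at hx
      have h1 : x < 1 := by
        have : (Real.exp 1)⁻¹ < 1 := by
          rw [inv_lt_one_iff₀]
          right; exact by nlinarith [Real.add_one_le_exp (1:ℝ)]
        linarith [hx.2]
      have := Real.log_neg (by linarith [hx.1]) h1
      linarith
  have := hmono (left_mem_Icc.2 hrs) (right_mem_Icc.2 hrs) hrs
  simp only [hf] at this
  nlinarith [this]


lemma gam_mono : Monotone gam := by
  intro r s hrs
  have hinv : (0:ℝ) < (Real.exp 1)⁻¹ := by positivity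
  by_cases h1 : r ≤ 0
  · have : gam r = 0 := by unfold gam; simp [h1]
    rw [this]; exact gam_nonneg s
  push_neg at h1
  have hs0 : ¬ s ≤ 0 := by linarith
  by_cases h2 : r < (Real.exp 1)⁻¹
  · by_cases h3 : s < (Real.exp 1)⁻¹
    · have e1 : gam r = r * (1 - Real.log r) := by unfold gam; simp [not_le.2 h1, h2]
      have e2 : gam s = s * (1 - Real.log s) := by unfold gam; simp [hs0, h3]
      rw [e1, e2]; exact curved h1 hrs h3.le
    · have e1 : gam r = r * (1 - Real.log r) := by unfold gam; simp [not_le.2 h1, h2]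
      have e2 : gam s = s + (Real.exp 1)⁻¹ := by unfold gam; simp [hs0, h3]
      rw [e1, e2]
      have := gam_key h1
      linarith
  · have h3 : ¬ s < (Real.exp 1)⁻¹ := by push_neg at h2 ⊢; linarith
    have e1 : gam r = r + (Real.exp 1)⁻¹ := by unfold gam; simp [not_le.2 h1, h2]
    have e2 : gam s = s + (Real.exp 1)⁻¹ := by unfold gam; simp [hs0, h3]
    rw [e1, e2]; linarith

-- pointwise supersolution inequality
lemma super_ineq (lam T A B s : ℝ) (hlam : 0 < lam) (hsT : s ≤ T)
    (hA : 1 ≤ A) (hB : 2 ≤ B * Real.exp (-(lam * T))) :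
    gam (Real.exp (A - B * Real.exp (-(lam * s)))) ≤
      B * Real.exp (-(lam * s)) * Real.exp (A - B * Real.exp (-(lam * s))) := by
  set r := Real.exp (A - B * Real.exp (-(lam * s))) with hr
  have hrpos : 0 < r := Real.exp_pos _
  have hlog : Real.log r = A - B * Real.exp (-(lam * s)) := Real.log_exp _
  have hBes : B * Real.exp (-(lam * T)) ≤ B * Real.exp (-(lam * s)) := by
    have hB0 : 0 < B := by
      nlinarith [Real.exp_pos (-(lam * T))]
    have : Real.exp (-(lam * T)) ≤ Real.exp (-(lam * s)) := by
      apply Real.exp_le_exp.2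
      nlinarith
    nlinarith
  unfold gam
  split_ifs with h1 h2
  · exact absurd h1 (not_le.2 hrpos)
  · rw [hlog]
    have h4 : 1 - (A - B * Real.exp (-(lam * s))) ≤ B * Real.exp (-(lam * s)) := by linarith
    nlinarith
  · push_neg at h2
    have : r + (Real.exp 1)⁻¹ ≤ 2 * r := by linarith
    nlinarith

lemma W_hasDeriv (lam A B t : ℝ) :
    HasDerivAt (fun t => Real.exp (A - B * Real.exp (-(lam * t))))
      (lam * B * Real.exp (-(lam * t)) * Real.exp (A - B * Real.exp (-(lam * t)))) t := by
  have h1 : HasDerivAt (fun t : ℝ => lam * t) lam t := by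
    simpa using (hasDerivAt_id t).const_mul lam
  have h2 := (((h1.neg).exp.const_mul B).const_sub A).exp
  convert h2 using 1
  · rfl
  · simp only [Pi.neg_apply]; ring

lemma comparison (T lam z₀ A B a : ℝ) (hT : 0 < T) (hlam : 0 < lam)
    (z : ℝ → ℝ)
    (hz : ∀ t ∈ Icc 0 T, z t = z₀ + lam * ∫ s in (0 : ℝ)..t, gam (z s))
    (hA : 1 ≤ A) (hB : 2 ≤ B * Real.exp (-(lam * T)))
    (hW0 : z₀ < Real.exp (A - B))
    (ha : a ∈ Icc 0 T)
    (hint : IntervalIntegrable (fun s => gam (z s)) volume 0 a) :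
    ∀ t ∈ Icc 0 a, z t ≤ Real.exp (A - B * Real.exp (-(lam * t))) := by
  set W : ℝ → ℝ := fun t => Real.exp (A - B * Real.exp (-(lam * t))) with hWdef
  set f : ℝ → ℝ := fun s => gam (z s) with hfdef
  have hWcont : Continuous W := by fun_prop
  have hB0 : 0 < B := by nlinarith [Real.exp_pos (-(lam * T))]
  have hW'cont : Continuous (fun t => lam * B * Real.exp (-(lam * t)) * W t) := by fun_prop
  -- continuous version of z on [0,a]
  have hIccsub : Icc (0:ℝ) a ⊆ Icc 0 T := Icc_subset_Icc le_rfl ha.2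
  have hIntOn : IntegrableOn f (Icc 0 a) := by
    rw [integrableOn_Icc_iff_integrableOn_Ioc]
    simpa [intervalIntegrable_iff, uIoc_of_le ha.1] using hint
  have hFcont : ContinuousOn (fun t => ∫ s in (0:ℝ)..t, f s) (Icc 0 a) := by
    have := intervalIntegral.continuousOn_primitive_interval
      (μ := volume) (a := (0:ℝ)) (b := a) (f := f)
      (by rw [uIcc_of_le ha.1]; exact hIntOn)
    rwa [uIcc_of_le ha.1] at this
  set G : ℝ → ℝ := fun t => z₀ + lam * ∫ s in (0:ℝ)..t, f s with hGdef
  have hGcont : ContinuousOn G (Icc 0 a) := by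
    apply ContinuousOn.add continuousOn_const
    exact hFcont.const_smul lam
  have hzG : ∀ t ∈ Icc 0 a, z t = G t := fun t ht => hz t (hIccsub ht)
  -- clamp
  set c : ℝ → ℝ := fun t => max 0 (min t a) with hcdef
  have hccont : Continuous c := by fun_prop
  have hcmem : ∀ t, c t ∈ Icc 0 a := by
    intro t
    constructor
    · exact le_max_left 0 _
    · exact max_le ha.1 (min_le_right t a)
  have hceq : ∀ t ∈ Icc 0 a, c t = t := by
    intro t ht
    simp [hcdef, min_eq_left ht.2, max_eq_right ht.1]
  have hGc : Continuous (fun t => G (c t)) := hGcont.comp_continuous hccont hcmem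
  -- the crossing set
  set K : Set ℝ := Icc 0 a ∩ {t | W t ≤ G (c t)} with hKdef
  have hKclosed : IsClosed K := isClosed_Icc.inter (isClosed_le hWcont hGc)
  -- suppose the crossing set is nonempty
  by_contra hcon
  push_neg at hcon
  obtain ⟨t₁, ht₁, ht₁gt⟩ := hcon
  have hKne : K.Nonempty := by
    refine ⟨t₁, ht₁, ?_⟩
    show W t₁ ≤ G (c t₁)
    rw [hceq t₁ ht₁, ← hzG t₁ ht₁]
    exact ht₁gt.le
  set t₀ : ℝ := sInf K with ht₀def
  have ht₀K : t₀ ∈ K := hKclosed.csInf_mem hKne ⟨0, fun x hx => hx.1.1⟩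
  obtain ⟨ht₀Icc, ht₀le'⟩ := ht₀K
  have ht₀le : W t₀ ≤ z t₀ := by
    have h := ht₀le'
    simp only [mem_setOf_eq] at h
    rwa [hceq t₀ ht₀Icc, ← hzG t₀ ht₀Icc] at h
  have hlt : ∀ s, 0 ≤ s → s < t₀ → z s < W s := by
    intro s hs0 hst
    have hsIcc : s ∈ Icc 0 a := ⟨hs0, hst.le.trans ht₀Icc.2⟩
    by_contra hle
    push_neg at hle
    have : s ∈ K := by
      refine ⟨hsIcc, ?_⟩
      show W s ≤ G (c s)
      rw [hceq s hsIcc, ← hzG s hsIcc]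
      exact hle
    exact absurd (csInf_le ⟨0, fun x hx => hx.1.1⟩ this) (not_le.2 hst)
  -- integrability over [0, t₀]
  have hint₀ : IntervalIntegrable f volume 0 t₀ := by
    apply hint.mono_set
    rw [uIcc_of_le ht₀Icc.1, uIcc_of_le ha.1]
    exact Icc_subset_Icc le_rfl ht₀Icc.2
  have hintW : IntervalIntegrable (fun s => gam (W s)) volume 0 t₀ := by
    rw [intervalIntegrable_iff]
    apply Integrable.mono' (g := fun _ : ℝ => gam (Real.exp A))
    · exact integrableOn_const measure_Ioc_lt_top.ne
    · exact (gam_mono.measurable.comp hWcont.measurable).aestronglyMeasurable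
    · apply ae_of_all
      intro x
      rw [Real.norm_eq_abs, abs_of_nonneg (gam_nonneg _)]
      apply gam_mono
      apply Real.exp_le_exp.2
      nlinarith [mul_pos hB0 (Real.exp_pos (-(lam * x)))]
  have haefW : f ≤ᵐ[volume.restrict (Icc 0 t₀)] fun s => gam (W s) := by
    rw [Filter.EventuallyLE, ae_restrict_iff' measurableSet_Icc]
    rw [ae_iff]
    refine measure_mono_null (fun x hx => ?_) (Real.volume_singleton (a := t₀))
    simp only [mem_setOf_eq, not_forall] at hx
    obtain ⟨hxIcc, hxgt⟩ := hx
    simp only [mem_singleton_iff]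
    by_contra hne
    have hxlt : x < t₀ := lt_of_le_of_ne hxIcc.2 hne
    exact hxgt (gam_mono (hlt x hxIcc.1 hxlt).le)
  have hmono1 : ∫ s in (0:ℝ)..t₀, f s ≤ ∫ s in (0:ℝ)..t₀, gam (W s) :=
    intervalIntegral.integral_mono_ae_restrict ht₀Icc.1 hint₀ hintW haefW
  have hintW2 : IntervalIntegrable (fun s => lam * gam (W s)) volume 0 t₀ := hintW.const_mul lam
  have hmono2 : ∫ s in (0:ℝ)..t₀, lam * gam (W s)
      ≤ ∫ s in (0:ℝ)..t₀, lam * B * Real.exp (-(lam * s)) * W s := by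
    apply intervalIntegral.integral_mono_on ht₀Icc.1 hintW2 (hW'cont.intervalIntegrable 0 t₀)
    intro x hx
    have h := super_ineq lam T A B x hlam (hx.2.trans (ht₀Icc.2.trans ha.2)) hA hB
    have := mul_le_mul_of_nonneg_left h hlam.le
    calc lam * gam (W x) ≤ lam * (B * Real.exp (-(lam * x)) * W x) := this
      _ = lam * B * Real.exp (-(lam * x)) * W x := by ring
  have hftc : ∫ s in (0:ℝ)..t₀, lam * B * Real.exp (-(lam * s)) * W s = W t₀ - W 0 :=
    intervalIntegral.integral_eq_sub_of_hasDerivAt (fun s _ => W_hasDeriv lam A B s)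
      (hW'cont.intervalIntegrable 0 t₀)
  have hW00 : W 0 = Real.exp (A - B) := by simp [hWdef]
  have hzt₀ : z t₀ = z₀ + lam * ∫ s in (0:ℝ)..t₀, f s := hz t₀ (hIccsub ht₀Icc)
  have hconst : lam * ∫ s in (0:ℝ)..t₀, gam (W s) = ∫ s in (0:ℝ)..t₀, lam * gam (W s) :=
    (intervalIntegral.integral_const_mul lam _).symm
  have hmul : lam * ∫ s in (0:ℝ)..t₀, f s ≤ lam * ∫ s in (0:ℝ)..t₀, gam (W s) :=
    mul_le_mul_of_nonneg_left hmono1 hlam.le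
  linarith

-- Step 2: full-interval integrability
lemma full_integrable (T lam z₀ : ℝ) (hT : 0 < T) (hlam : 0 < lam)
    (hz₀ : z₀ ∈ Set.Icc 0 (Real.exp (1 - 2 * Real.exp (lam * T))))
    (z : ℝ → ℝ)
    (hz : ∀ t ∈ Set.Icc 0 T, z t = z₀ + lam * ∫ s in (0 : ℝ)..t, gam (z s)) :
    IntervalIntegrable (fun s => gam (z s)) volume 0 T := by
  set f : ℝ → ℝ := fun s => gam (z s) with hfdef
  set B₀ : ℝ := 2 * Real.exp (lam * T) + 2⁻¹ with hB₀def
  have hB₀ : 2 ≤ B₀ * Real.exp (-(lam * T)) := by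
    have h1 : B₀ * Real.exp (-(lam * T)) = 2 + 2⁻¹ * Real.exp (-(lam * T)) := by
      rw [Real.exp_neg]
      have := Real.exp_ne_zero (lam * T)
      field_simp
      ring
    rw [h1]
    linarith [Real.exp_pos (-(lam * T))]
  have hW0₀ : z₀ < Real.exp (2 - B₀) := by
    have : (1 : ℝ) - 2 * Real.exp (lam * T) < 2 - B₀ := by
      rw [hB₀def]; linarith [Real.exp_pos (lam * T)]
    calc z₀ ≤ Real.exp (1 - 2 * Real.exp (lam * T)) := hz₀.2
      _ < Real.exp (2 - B₀) := Real.exp_lt_exp.2 this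
  -- the bound from the comparison lemma
  have hbound : ∀ x ∈ Icc 0 T, IntervalIntegrable f volume 0 x →
      ∀ s ∈ Icc 0 x, z s ≤ Real.exp 2 := by
    intro x hx hintx s hs
    have h := comparison T lam z₀ 2 B₀ x hT hlam z hz (by norm_num) hB₀ hW0₀ hx hintx s hs
    have hB₀pos : 0 < B₀ := by positivity
    calc z s ≤ Real.exp (2 - B₀ * Real.exp (-(lam * s))) := h
      _ ≤ Real.exp 2 := Real.exp_le_exp.2 (by nlinarith [Real.exp_pos (-(lam * s))])
  set S : Set ℝ := {x | x ∈ Icc 0 T ∧ IntervalIntegrable f volume 0 x} with hSdef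
  have hS0 : (0:ℝ) ∈ S := ⟨⟨le_refl 0, hT.le⟩, IntervalIntegrable.refl⟩
  have hSbdd : BddAbove S := ⟨T, fun x hx => hx.1.2⟩
  set c : ℝ := sSup S with hcdef
  have h0c : 0 ≤ c := le_csSup hSbdd hS0
  have hcT : c ≤ T := csSup_le ⟨0, hS0⟩ (fun x hx => hx.1.2)
  have hdown : ∀ x, 0 ≤ x → x < c → IntervalIntegrable f volume 0 x := by
    intro x hx0 hxc
    obtain ⟨y, hyS, hxy⟩ := exists_lt_of_lt_csSup ⟨0, hS0⟩ hxc
    apply hyS.2.mono_set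
    rw [uIcc_of_le hx0, uIcc_of_le hyS.1.1]
    exact Icc_subset_Icc le_rfl hxy.le
  have hmonoz : MonotoneOn z (Ico 0 c) := by
    intro s hs t ht hst
    have hsT : s ∈ Icc 0 T := ⟨hs.1, (hs.2.le.trans hcT)⟩
    have htT : t ∈ Icc 0 T := ⟨ht.1, (ht.2.le.trans hcT)⟩
    have h0t := hdown t ht.1 ht.2
    have h0s := hdown s hs.1 hs.2
    have hstI : IntervalIntegrable f volume s t := by
      apply h0t.mono_set
      rw [uIcc_of_le hst, uIcc_of_le ht.1]
      exact Icc_subset_Icc hs.1 le_rfl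
    have hadd := intervalIntegral.integral_add_adjacent_intervals h0s hstI
    have hpos : 0 ≤ ∫ u in s..t, f u :=
      intervalIntegral.integral_nonneg hst (fun u _ => gam_nonneg _)
    have hzs := hz s hsT
    have hzt := hz t htT
    nlinarith [hadd]
  have hcS : IntervalIntegrable f volume 0 c := by
    rcases eq_or_lt_of_le h0c with h | h
    · rw [← h]
    · have hzm : AEMeasurable z (volume.restrict (Ioo 0 c)) :=
        aemeasurable_restrict_of_monotoneOn measurableSet_Ioo
          (hmonoz.mono Ioo_subset_Ico_self)
      have hfm : AEMeasurable f (volume.restrict (Ioo 0 c)) :=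
        gam_mono.measurable.comp_aemeasurable hzm
      have hIoo : IntegrableOn f (Ioo 0 c) := by
        apply Integrable.mono' (g := fun _ : ℝ => gam (Real.exp 2))
        · exact integrableOn_const measure_Ioo_lt_top.ne
        · exact hfm.aestronglyMeasurable
        · rw [ae_restrict_iff' measurableSet_Ioo]
          apply ae_of_all
          intro x hx
          rw [Real.norm_eq_abs, abs_of_nonneg (gam_nonneg _)]
          apply gam_mono
          have hy : (x + c) / 2 < c := by linarith [hx.2]
          exact hbound ((x + c)/2) ⟨by linarith [hx.1], hy.le.trans hcT⟩
            (hdown _ (by linarith [hx.1]) hy) x ⟨hx.1.le, by linarith [hx.2]⟩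
      rw [intervalIntegrable_iff, uIoc_of_le h0c]
      rwa [integrableOn_Ioc_iff_integrableOn_Ioo]
  have hceq : c = T := by
    by_contra hne
    have hcltT : c < T := lt_of_le_of_ne hcT hne
    have hzconst : ∀ u ∈ Ioc c T, z u = z₀ := by
      intro u hu
      have huT : u ∈ Icc 0 T := ⟨h0c.trans hu.1.le, hu.2⟩
      have hnot : ¬ IntervalIntegrable f volume 0 u := by
        intro hI
        have : u ∈ S := ⟨huT, hI⟩
        exact absurd (le_csSup hSbdd this) (not_le.2 hu.1)
      rw [hz u huT, intervalIntegral.integral_undef hnot]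
      ring
    have hconstI : IntervalIntegrable f volume c T := by
      rw [intervalIntegrable_iff, uIoc_of_le hcltT.le]
      have hci : IntegrableOn (fun _ : ℝ => gam z₀) (Ioc c T) volume :=
        integrableOn_const measure_Ioc_lt_top.ne
      exact hci.congr_fun (fun u hu => by simp [hfdef, hzconst u hu]) measurableSet_Ioc
    have hTS : T ∈ S := ⟨⟨hT.le, le_refl T⟩, hcS.trans hconstI⟩
    exact absurd (le_csSup hSbdd hTS) (not_le.2 hcltT)
  rwa [hceq] at hcS

/-- If `z : [0,T] → [0,∞)` solves `z_t = z₀ + λ ∫₀ᵗ γ(z_s) ds` with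
`z₀ ∈ [0, exp(1 - 2 e^{λT})]`, then `z_t ≤ e ⬝ z₀ ^ (exp (-λ t))` on `[0,T]`. -/
theorem osgood_comparison (T lam z₀ : ℝ) (hT : 0 < T) (hlam : 0 < lam)
    (hz₀ : z₀ ∈ Set.Icc 0 (Real.exp (1 - 2 * Real.exp (lam * T))))
    (z : ℝ → ℝ) (hznn : ∀ t ∈ Set.Icc 0 T, 0 ≤ z t)
    (hz : ∀ t ∈ Set.Icc 0 T, z t = z₀ + lam * ∫ s in (0 : ℝ)..t, gam (z s)) :
    ∀ t ∈ Set.Icc 0 T, z t ≤ Real.exp 1 * z₀ ^ Real.exp (-lam * t) := by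
  intro t ht
  have hTmem : T ∈ Icc (0:ℝ) T := ⟨hT.le, le_refl T⟩
  have hint := full_integrable T lam z₀ hT hlam hz₀ z hz
  have hexp_t : Real.exp (-lam * t) = Real.exp (-(lam * t)) := by ring_nf
  rcases eq_or_lt_of_le hz₀.1 with h0 | h0
  · -- z₀ = 0
    rw [← h0, Real.zero_rpow (Real.exp_ne_zero _) , mul_zero]
    by_contra hpos
    push_neg at hpos
    set B : ℝ := max (2 * Real.exp (lam * T) + 1) ((1 - Real.log (z t)) * Real.exp (lam * t) + 1)
      with hBdef
    clear_value B
    have hB1 : 2 * Real.exp (lam * T) + 1 ≤ B := by rw [hBdef]; exact le_max_left _ _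
    have hB2 : (1 - Real.log (z t)) * Real.exp (lam * t) + 1 ≤ B := by
      rw [hBdef]; exact le_max_right _ _
    have hBcond : 2 ≤ B * Real.exp (-(lam * T)) := by
      have h1 : (2 * Real.exp (lam * T) + 1) * Real.exp (-(lam * T))
          = 2 + Real.exp (-(lam * T)) := by
        rw [Real.exp_neg]
        have := Real.exp_ne_zero (lam * T)
        field_simp
      have h2 : (2 * Real.exp (lam * T) + 1) * Real.exp (-(lam * T)) ≤ B * Real.exp (-(lam * T)) :=
        mul_le_mul_of_nonneg_right hB1 (Real.exp_pos _).le
      rw [h1] at h2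
      linarith [Real.exp_pos (-(lam * T))]
    have hW0 : z₀ < Real.exp (1 - B) := by rw [← h0]; exact Real.exp_pos _
    have hcomp := comparison T lam z₀ 1 B T hT hlam z hz (le_refl 1) hBcond hW0 hTmem hint t ht
    have hkey : (( 1 - Real.log (z t)) * Real.exp (lam * t) + 1) * Real.exp (-(lam * t))
        = (1 - Real.log (z t)) + Real.exp (-(lam * t)) := by
      rw [Real.exp_neg]
      have := Real.exp_ne_zero (lam * t)
      field_simp
    have h2 : (1 - Real.log (z t)) + Real.exp (-(lam * t)) ≤ B * Real.exp (-(lam * t)) := by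
      rw [← hkey]
      exact mul_le_mul_of_nonneg_right hB2 (Real.exp_pos _).le
    have h3 : 1 - B * Real.exp (-(lam * t)) < Real.log (z t) := by
      linarith [Real.exp_pos (-(lam * t))]
    have h4 : Real.exp (1 - B * Real.exp (-(lam * t))) < z t := by
      calc Real.exp (1 - B * Real.exp (-(lam * t))) < Real.exp (Real.log (z t)) :=
            Real.exp_lt_exp.2 h3
        _ = z t := Real.exp_log hpos
    linarith
  · -- z₀ > 0
    set R : ℝ := Real.exp 1 * z₀ ^ Real.exp (-lam * t) with hRdef
    clear_value R
    have hRpos : 0 < R := by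
      rw [hRdef]
      exact mul_pos (Real.exp_pos 1) (Real.rpow_pos_of_pos h0 _)
    have hlog : Real.log z₀ ≤ 1 - 2 * Real.exp (lam * T) := by
      calc Real.log z₀ ≤ Real.log (Real.exp (1 - 2 * Real.exp (lam * T))) :=
            Real.log_le_log h0 hz₀.2
        _ = 1 - 2 * Real.exp (lam * T) := Real.log_exp _
    set L : ℝ := -Real.log z₀ with hLdef
    clear_value L
    have hL : 2 * Real.exp (lam * T) - 1 ≤ L := by rw [hLdef]; linarith
    have hmain : ∀ δ : ℝ, 0 < δ → z t ≤ Real.exp δ * R := by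
      intro δ hδ
      set A : ℝ := 1 + δ with hAdef
      clear_value A
      set B : ℝ := L + 1 + δ / 2 with hBdef
      clear_value B
      have hBcond : 2 ≤ B * Real.exp (-(lam * T)) := by
        have h1 : (2 * Real.exp (lam * T) + δ/2) * Real.exp (-(lam * T))
            = 2 + (δ/2) * Real.exp (-(lam * T)) := by
          rw [Real.exp_neg]
          have := Real.exp_ne_zero (lam * T)
          field_simp
        have hle : 2 * Real.exp (lam * T) + δ/2 ≤ B := by rw [hBdef]; linarith
        have h2 := mul_le_mul_of_nonneg_right hle (Real.exp_pos (-(lam * T))).le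
        rw [h1] at h2
        have h3 : 0 < δ / 2 * Real.exp (-(lam * T)) :=
          mul_pos (half_pos hδ) (Real.exp_pos (-(lam * T)))
        linarith
      have hW0 : z₀ < Real.exp (A - B) := by
        have : A - B = δ/2 + Real.log z₀ := by rw [hAdef, hBdef, hLdef]; ring
        rw [this, Real.exp_add, Real.exp_log h0]
        nlinarith [Real.add_one_le_exp (δ/2)]
      have hcomp := comparison T lam z₀ A B T hT hlam z hz (by rw [hAdef]; linarith)
        hBcond hW0 hTmem hint t ht
      have hRe : Real.exp δ * R = Real.exp (δ + 1 + Real.exp (-(lam * t)) * Real.log z₀) := by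
        rw [hRdef, Real.rpow_def_of_pos h0, ← Real.exp_add, ← Real.exp_add, hexp_t]
        ring_nf
      rw [hRe]
      apply hcomp.trans
      apply Real.exp_le_exp.2
      rw [hAdef, hBdef, hLdef]
      nlinarith [Real.exp_pos (-(lam * t))]
    by_contra hgt
    push_neg at hgt
    set δ₀ : ℝ := Real.log (z t / R) with hδ₀def
    clear_value δ₀
    have hztpos : 0 < z t := lt_trans hRpos hgt
    have hδ₀pos : 0 < δ₀ := by
      rw [hδ₀def]
      exact Real.log_pos ((one_lt_div hRpos).2 hgt)
    have h1 := hmain (δ₀ / 2) (half_pos hδ₀pos)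
    have h2 : Real.exp (δ₀ / 2) < Real.exp δ₀ := Real.exp_lt_exp.2 (by linarith)
    have h3 : Real.exp δ₀ = z t / R := by
      rw [hδ₀def]
      exact Real.exp_log (div_pos hztpos hRpos)
    have h4 : Real.exp δ₀ * R = z t := by
      rw [h3]; field_simp
    nlinarith [h1, h2, hRpos]
end

section
/- Let z : [0,T] → [0,∞) be continuous and satisfy z_t ≤ z₀ + λ ∫₀ᵗ γ(z_s) ds with z₀ ∈ [0, exp(1 - 2e^{λT})]. Then z_t ≤ e · z₀^{exp(-λ t)} for all t ∈ [0,T]; in particular, if z₀ = 0 then z ≡ 0 on [0,T]. -/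
open Set Filter Topology

noncomputable def gsm (r : ℝ) : ℝ := r - r * Real.log r

lemma one_lt_exp_one : (1:ℝ) < Real.exp 1 := by
  have := Real.exp_one_gt_d9; linarith

lemma log_einv : Real.log (Real.exp 1)⁻¹ = -1 := by
  rw [Real.log_inv, Real.log_exp]

lemma gam_eq_gsm {r : ℝ} (h0 : 0 ≤ r) (h1 : r ≤ (Real.exp 1)⁻¹) : gam r = gsm r := by
  rcases h0.lt_or_eq with hr | hr
  · unfold gam gsm
    rw [if_neg (not_le.2 hr)]
    rcases h1.lt_or_eq with h | h
    · rw [if_pos h]; ring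
    · rw [if_neg (not_lt.2 h.ge), h, log_einv]; ring
  · unfold gam gsm
    rw [← hr]
    simp [Real.log_zero]

lemma gsm_mono : MonotoneOn gsm (Set.Icc 0 (Real.exp 1)⁻¹) := by
  have hs : StrictMonoOn gsm (Set.Icc 0 (Real.exp 1)⁻¹) := by
    apply strictMonoOn_of_deriv_pos (convex_Icc _ _)
    · exact (continuous_id.sub Real.continuous_mul_log).continuousOn
    · intro x hx
      rw [interior_Icc] at hx
      have hx0 : x ≠ 0 := ne_of_gt hx.1
      have hd : HasDerivAt gsm (1 - (Real.log x + 1)) x :=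
        (hasDerivAt_id x).sub (Real.hasDerivAt_mul_log hx0)
      rw [hd.deriv]
      have hx1 : x < 1 := lt_trans hx.2 (by
        have h1 : (0:ℝ) < Real.exp 1 := Real.exp_pos 1
        rw [inv_lt_one_iff₀]; right; exact one_lt_exp_one)
      have := Real.log_neg hx.1 hx1
      linarith
  exact hs.monotoneOn

lemma osgood_core (T lam z₀ : ℝ) (hlam : 0 < lam) (hz₀0 : 0 ≤ z₀)
    (z : ℝ → ℝ) (hcont : ContinuousOn z (Set.Icc 0 T))
    (hznn : ∀ t ∈ Set.Icc 0 T, 0 ≤ z t)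
    (hz : ∀ t ∈ Set.Icc 0 T, z t ≤ z₀ + lam * ∫ s in (0:ℝ)..t, gam (z s))
    (t₀ : ℝ) (ht₀ : t₀ ∈ Set.Icc 0 T)
    (b : ℝ) (hzb : z₀ < b) (hbE : Real.log b ≤ 1 - 2 * Real.exp (lam * t₀)) :
    ∀ t ∈ Set.Icc 0 t₀, z t ≤ Real.exp 1 * b ^ Real.exp (-lam * t) := by
  have hb0 : 0 < b := lt_of_le_of_lt hz₀0 hzb
  set c : ℝ := 1 - Real.log b with hc_def
  have hc : 2 * Real.exp (lam * t₀) ≤ c := by rw [hc_def]; linarith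
  set y : ℝ → ℝ := fun t => Real.exp (1 - c * Real.exp (-lam * t)) with hy_def
  have hy_pos : ∀ s, 0 < y s := fun s => Real.exp_pos _
  have hsubset : Set.Icc 0 t₀ ⊆ Set.Icc 0 T := Set.Icc_subset_Icc le_rfl ht₀.2
  -- y 0 = b
  have hy0 : y 0 = b := by
    rw [hy_def]; simp only [mul_zero, neg_zero, Real.exp_zero, mul_one, hc_def]
    rw [show 1 - (1 - Real.log b) = Real.log b by ring, Real.exp_log hb0]
  -- y is small on [0, t₀]
  have hysmall : ∀ s ∈ Set.Icc 0 t₀, y s ≤ (Real.exp 1)⁻¹ := by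
    intro s hs
    rw [hy_def, ← Real.exp_neg]
    apply Real.exp_le_exp.2
    have h1 : Real.exp (lam * t₀) * Real.exp (-lam * s) = Real.exp (lam * (t₀ - s)) := by
      rw [← Real.exp_add]; ring_nf
    have h2 : (1:ℝ) ≤ Real.exp (lam * (t₀ - s)) := by
      apply Real.one_le_exp
      have := hs.2
      nlinarith
    have h3 : (2:ℝ) ≤ 2 * Real.exp (lam * t₀) * Real.exp (-lam * s) := by
      rw [mul_assoc, h1]; nlinarith
    have h4 : (0:ℝ) < Real.exp (-lam * s) := Real.exp_pos _
    nlinarith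
  -- derivative of y
  have hyderiv : ∀ s, HasDerivAt y (lam * gsm (y s)) s := by
    intro s
    have h1 : HasDerivAt (fun u : ℝ => -lam * u) (-lam) s := by
      simpa using (hasDerivAt_id s).const_mul (-lam)
    have h2 : HasDerivAt (fun u : ℝ => Real.exp (-lam * u)) (Real.exp (-lam * s) * -lam) s :=
      (Real.hasDerivAt_exp (-lam * s)).comp s h1
    have h3 : HasDerivAt (fun u : ℝ => 1 - c * Real.exp (-lam * u))
        (-(c * (Real.exp (-lam * s) * -lam))) s := ((h2.const_mul c)).const_sub 1
    have h4 := (Real.hasDerivAt_exp (1 - c * Real.exp (-lam * s))).comp s h3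
    have h5 : gsm (y s) = y s * (c * Real.exp (-lam * s)) := by
      rw [hy_def]; unfold gsm
      rw [Real.log_exp]; ring
    rw [hy_def]
    refine HasDerivAt.congr_deriv h4 ?_
    rw [show Real.exp (1 - c * Real.exp (-lam*s)) = y s from rfl, h5]
    ring
  have hycont : Continuous y := by
    rw [hy_def]; fun_prop
  have hgsm_y_cont : Continuous fun s => gsm (y s) := by
    have : (fun s => gsm (y s)) = fun s => y s * (c * Real.exp (-lam * s)) := by
      funext s
      rw [hy_def]; unfold gsm; rw [Real.log_exp]; ring
    rw [this, hy_def]; fun_prop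
  -- FTC identity
  have hFTC : ∀ t : ℝ, lam * (∫ s in (0:ℝ)..t, gsm (y s)) = y t - b := by
    intro t
    rw [← intervalIntegral.integral_const_mul]
    rw [intervalIntegral.integral_eq_sub_of_hasDerivAt (fun s _ => hyderiv s)
      ((continuous_const.mul hgsm_y_cont).intervalIntegrable _ _), hy0]
  -- comparison: z ≤ y on [0, t₀]
  have hcomp : ∀ t ∈ Set.Icc 0 t₀, z t ≤ y t := by
    by_contra hcon
    push_neg at hcon
    obtain ⟨t₁, ht₁, hlt⟩ := hcon
    set S : Set ℝ := Set.Icc 0 t₀ ∩ {t | 0 ≤ z t - y t} with hS_def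
    have hSne : S.Nonempty := ⟨t₁, ht₁, by simp [Set.mem_setOf_eq]; linarith⟩
    have hSbdd : BddBelow S := ⟨0, fun x hx => hx.1.1⟩
    have hScl : IsClosed S := by
      apply ContinuousOn.preimage_isClosed_of_isClosed
        (((hcont.mono hsubset).sub hycont.continuousOn)) isClosed_Icc isClosed_Ici
    set ts : ℝ := sInf S with hts_def
    have hts_mem : ts ∈ S := hScl.csInf_mem hSne hSbdd
    have hts_Icc : ts ∈ Set.Icc 0 t₀ := hts_mem.1
    have hyz : y ts ≤ z ts := by have := hts_mem.2; simp only [Set.mem_setOf_eq] at this; linarith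
    have hlb : ∀ s ∈ Set.Icc 0 t₀, s < ts → z s < y s := by
      intro s hs hst
      by_contra hcc
      push_neg at hcc
      have : s ∈ S := ⟨hs, by simp only [Set.mem_setOf_eq]; linarith⟩
      exact absurd (csInf_le hSbdd this) (not_le.2 hst)
    -- z 0 ≤ z₀ < b = y 0
    have hz0b : z 0 < y 0 := by
      have h0T : (0:ℝ) ∈ Set.Icc 0 T := ⟨le_rfl, ht₀.1.trans ht₀.2⟩
      have := hz 0 h0T
      rw [intervalIntegral.integral_same] at this
      rw [hy0]; linarith
    have hts_pos : 0 < ts := by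
      rcases hts_Icc.1.lt_or_eq with h | h
      · exact h
      · exfalso; rw [← h] at hyz; linarith
    -- z ts ≤ y ts by left limit
    have hzy_ts : z ts ≤ y ts := by
      have hne : (𝓝[Set.Ico 0 ts] ts).NeBot := by
        apply mem_closure_iff_nhdsWithin_neBot.mp
        rw [closure_Ico (ne_of_lt hts_pos)]
        exact ⟨hts_pos.le, le_rfl⟩
      have hIcosub : Set.Ico 0 ts ⊆ Set.Icc 0 T :=
        fun s hs => ⟨hs.1, le_trans (le_of_lt hs.2) (hts_Icc.2.trans ht₀.2)⟩
      have hzt : Tendsto z (𝓝[Set.Ico 0 ts] ts) (𝓝 (z ts)) :=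
        ((hcont ts (hsubset hts_Icc)).mono hIcosub).tendsto
      have hyt : Tendsto y (𝓝[Set.Ico 0 ts] ts) (𝓝 (y ts)) :=
        (hycont.continuousAt.continuousWithinAt).tendsto
      apply le_of_tendsto_of_tendsto hzt hyt
      apply eventually_nhdsWithin_of_forall
      intro s hs
      exact (hlb s ⟨hs.1, le_trans (le_of_lt hs.2) hts_Icc.2⟩ hs.2).le
    have hzy_le : ∀ s ∈ Set.Icc 0 ts, z s ≤ y s := by
      intro s hs
      rcases hs.2.lt_or_eq with h | h
      · exact (hlb s ⟨hs.1, le_trans hs.2 hts_Icc.2⟩ h).le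
      · rw [h]; exact hzy_ts
    -- integral comparison
    have hmemT : ts ∈ Set.Icc 0 T := hsubset hts_Icc
    have huIcc : Set.uIcc (0:ℝ) ts = Set.Icc 0 ts := Set.uIcc_of_le hts_Icc.1
    have hcongz : (∫ s in (0:ℝ)..ts, gam (z s)) = ∫ s in (0:ℝ)..ts, gsm (z s) := by
      apply intervalIntegral.integral_congr
      intro s hs
      rw [huIcc] at hs
      exact gam_eq_gsm (hznn s (hsubset (Set.Icc_subset_Icc le_rfl hts_Icc.2 hs)))
        (le_trans (hzy_le s hs) (hysmall s (Set.Icc_subset_Icc le_rfl hts_Icc.2 hs)))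
    have hcontz : ContinuousOn z (Set.Icc 0 ts) := hcont.mono (fun s hs =>
      hsubset (Set.Icc_subset_Icc le_rfl hts_Icc.2 hs))
    have hint_z : IntervalIntegrable (fun s => gsm (z s)) MeasureTheory.volume 0 ts := by
      apply ContinuousOn.intervalIntegrable
      rw [huIcc]
      exact (continuous_id.sub Real.continuous_mul_log).comp_continuousOn hcontz
    have hint_y : IntervalIntegrable (fun s => gsm (y s)) MeasureTheory.volume 0 ts :=
      hgsm_y_cont.intervalIntegrable _ _
    have hmono : (∫ s in (0:ℝ)..ts, gsm (z s)) ≤ ∫ s in (0:ℝ)..ts, gsm (y s) := by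
      apply intervalIntegral.integral_mono_on hts_Icc.1 hint_z hint_y
      intro s hs
      have hsT : s ∈ Set.Icc 0 T := hsubset (Set.Icc_subset_Icc le_rfl hts_Icc.2 hs)
      have hs0 : s ∈ Set.Icc 0 t₀ := Set.Icc_subset_Icc le_rfl hts_Icc.2 hs
      apply gsm_mono ⟨hznn s hsT, le_trans (hzy_le s hs) (hysmall s hs0)⟩
        ⟨(hy_pos s).le, hysmall s hs0⟩ (hzy_le s hs)
    have hfinal := hz ts hmemT
    rw [hcongz] at hfinal
    have h6 : lam * (∫ s in (0:ℝ)..ts, gsm (z s)) ≤ lam * ∫ s in (0:ℝ)..ts, gsm (y s) :=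
      mul_le_mul_of_nonneg_left hmono hlam.le
    rw [hFTC ts] at h6
    linarith
  -- conclude: y t ≤ exp 1 * b ^ exp (-lam t)
  intro t ht
  refine le_trans (hcomp t ht) ?_
  rw [Real.rpow_def_of_pos hb0, ← Real.exp_add, hy_def]
  apply Real.exp_le_exp.2
  have hp : 0 < Real.exp (-lam * t) := Real.exp_pos _
  rw [hc_def]
  nlinarith

/-- Osgood-type Gronwall lemma: if `z : [0,T] → [0,∞)` is continuous and satisfies
`z_t ≤ z₀ + λ ∫₀ᵗ γ(z_s) ds` with `z₀ ∈ [0, exp(1 - 2 e^{λT})]`, then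
`z_t ≤ e ⬝ z₀ ^ (exp (-λ t))` on `[0,T]`; in particular `z₀ = 0` forces `z ≡ 0`. -/
theorem osgood_gronwall (T lam z₀ : ℝ) (hT : 0 < T) (hlam : 0 < lam)
    (hz₀ : z₀ ∈ Set.Icc 0 (Real.exp (1 - 2 * Real.exp (lam * T))))
    (z : ℝ → ℝ) (hcont : ContinuousOn z (Set.Icc 0 T))
    (hznn : ∀ t ∈ Set.Icc 0 T, 0 ≤ z t)
    (hz : ∀ t ∈ Set.Icc 0 T, z t ≤ z₀ + lam * ∫ s in (0 : ℝ)..t, gam (z s)) :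
    (∀ t ∈ Set.Icc 0 T, z t ≤ Real.exp 1 * z₀ ^ Real.exp (-lam * t)) ∧
      (z₀ = 0 → ∀ t ∈ Set.Icc 0 T, z t = 0) := by
  have main_bound : ∀ t ∈ Set.Icc 0 T, z₀ < Real.exp (1 - 2 * Real.exp (lam * t)) →
      z t ≤ Real.exp 1 * z₀ ^ Real.exp (-lam * t) := by
    intro t ht hzE
    have key : ∀ b, z₀ < b → b ≤ Real.exp (1 - 2 * Real.exp (lam * t)) →
        z t ≤ Real.exp 1 * b ^ Real.exp (-lam * t) := by
      intro b h1 h2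
      have hb0 : 0 < b := lt_of_le_of_lt hz₀.1 h1
      have hlog : Real.log b ≤ 1 - 2 * Real.exp (lam * t) := by
        calc Real.log b ≤ Real.log (Real.exp (1 - 2 * Real.exp (lam * t))) :=
              Real.log_le_log hb0 h2
          _ = _ := Real.log_exp _
      exact osgood_core T lam z₀ hlam hz₀.1 z hcont hznn hz t ht b h1 hlog t ⟨ht.1, le_rfl⟩
    have hrpow : ContinuousAt (fun x : ℝ => x ^ Real.exp (-lam * t)) z₀ :=
      Real.continuousAt_rpow_const z₀ _ (Or.inr (Real.exp_pos _).le)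
    have htend : Tendsto (fun b => Real.exp 1 * b ^ Real.exp (-lam * t)) (𝓝[>] z₀)
        (𝓝 (Real.exp 1 * z₀ ^ Real.exp (-lam * t))) :=
      ((continuousAt_const.mul hrpow).tendsto).mono_left nhdsWithin_le_nhds
    have hev : ∀ᶠ b in 𝓝[>] z₀, z t ≤ Real.exp 1 * b ^ Real.exp (-lam * t) := by
      filter_upwards [Ioc_mem_nhdsGT_of_mem ⟨le_rfl, hzE⟩] with b hb
      exact key b hb.1 hb.2
    exact ge_of_tendsto htend hev
  have part1 : ∀ t ∈ Set.Icc 0 T, z t ≤ Real.exp 1 * z₀ ^ Real.exp (-lam * t) := by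
    intro t ht
    have hmono : Real.exp (lam * t) ≤ Real.exp (lam * T) :=
      Real.exp_le_exp.2 (mul_le_mul_of_nonneg_left ht.2 hlam.le)
    have hEt : z₀ ≤ Real.exp (1 - 2 * Real.exp (lam * t)) :=
      le_trans hz₀.2 (Real.exp_le_exp.2 (by linarith))
    rcases hEt.lt_or_eq with h | h
    · exact main_bound t ht h
    · -- boundary case: z₀ = E_t; t must be positive, take left limit
      have hz0pos : 0 < z₀ := h ▸ Real.exp_pos _
      have htpos : 0 < t := by
        rcases ht.1.lt_or_eq with h' | h'
        · exact h'
        · exfalso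
          have h1 : (1:ℝ) < Real.exp (lam * T) := by
            rw [← Real.exp_zero]
            exact Real.exp_lt_exp.2 (by positivity)
          have h2 : Real.exp (1 - 2 * Real.exp (lam * T)) < Real.exp (1 - 2 * Real.exp (lam * t)) := by
            rw [← h'] at *
            apply Real.exp_lt_exp.2
            rw [mul_zero, Real.exp_zero]
            linarith
          rw [← h] at h2
          exact absurd hz₀.2 (not_le.2 h2)
      have hbound : ∀ s ∈ Set.Ico 0 t, z s ≤ Real.exp 1 * z₀ ^ Real.exp (-lam * s) := by
        intro s hs
        have hsT : s ∈ Set.Icc 0 T := ⟨hs.1, le_trans hs.2.le ht.2⟩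
        apply main_bound s hsT
        rw [h]
        apply Real.exp_lt_exp.2
        have : Real.exp (lam * s) < Real.exp (lam * t) :=
          Real.exp_lt_exp.2 (by nlinarith [hs.2])
        linarith
      have hne : (𝓝[Set.Ico 0 t] t).NeBot := by
        apply mem_closure_iff_nhdsWithin_neBot.mp
        rw [closure_Ico (ne_of_lt htpos)]
        exact ⟨htpos.le, le_rfl⟩
      have hzt : Tendsto z (𝓝[Set.Ico 0 t] t) (𝓝 (z t)) :=
        ((hcont t ht).mono (fun s hs => ⟨hs.1, le_trans hs.2.le ht.2⟩)).tendsto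
      have hReq : (fun s => Real.exp 1 * z₀ ^ Real.exp (-lam * s)) =
          fun s => Real.exp 1 * Real.exp (Real.log z₀ * Real.exp (-lam * s)) := by
        funext s; rw [Real.rpow_def_of_pos hz0pos]
      have hRcont : Continuous fun s => Real.exp 1 * z₀ ^ Real.exp (-lam * s) := by
        rw [hReq]; fun_prop
      have hRt : Tendsto (fun s => Real.exp 1 * z₀ ^ Real.exp (-lam * s))
          (𝓝[Set.Ico 0 t] t) (𝓝 (Real.exp 1 * z₀ ^ Real.exp (-lam * t))) :=
        (hRcont.tendsto t).mono_left nhdsWithin_le_nhds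
      apply le_of_tendsto_of_tendsto hzt hRt
      exact eventually_nhdsWithin_of_forall hbound
  refine ⟨part1, fun h0 t ht => ?_⟩
  have := part1 t ht
  rw [h0, Real.zero_rpow (Real.exp_pos _).ne', mul_zero] at this
  exact le_antisymm this (hznn t ht)
end

section
/- With notation as above (h = k case), E[c | F_a] - δ/2 is bounded in absolute value by (ε⁴/2)|η^{ε,k}_a|² (1 - e^{-ε^{-2}δ})² + (3/2)ε² + ε² e^{-ε^{-2}δ}(2 + e^{-ε^{-2}δ})/2; in particular if δ = δ_ε with δ_ε/ε² → ∞ as ε → 0, then E[|E[c | F_a] - δ_ε/2|] ≤ C ε² for small ε. -/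
open MeasureTheory Filter

/-- The value of the conditional expectation `E[c | F_a]` of the iterated
Ornstein–Uhlenbeck integral (diagonal case `h = k`), as a function of `ε`, the time
step `d` and the value `x = η^{ε,k}_a`. -/
noncomputable def ouCondExpVal (ε d x : ℝ) : ℝ :=
  ε ^ 4 / 2 * x ^ 2 * (Real.exp (-(ε ^ 2)⁻¹ * d) - 1) ^ 2
    + 1 / 2 * (d + ε ^ 2 * (-(3 / 2) + 2 * Real.exp (-(ε ^ 2)⁻¹ * d)
        - 1 / 2 * Real.exp (-2 * (ε ^ 2)⁻¹ * d)))

/-- In the diagonal case, `E[c | F_a] - δ/2` is pointwise bounded by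
`(ε⁴/2)|η^{ε,k}_a|²(1 - e^{-ε⁻²δ})² + (3/2)ε² + ε² e^{-ε⁻²δ}(2 + e^{-ε⁻²δ})/2`;
in particular, if `δ_ε/ε² → ∞` as `ε → 0` and `E[|η^{ε,k}_a|²] = ε⁻²/2`, then
`E[|E[c | F_a] - δ_ε/2|] ≤ C ε²` for small `ε`. -/
theorem ou_condexp_error_bound {Ω : Type*} [MeasurableSpace Ω] (μ : Measure Ω)
    [IsProbabilityMeasure μ] (X : ℝ → Ω → ℝ) (δ : ℝ → ℝ)
    (hmeas : ∀ ε, Measurable (X ε))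
    (hX2 : ∀ ε, 0 < ε → ∫ ω, (X ε ω) ^ 2 ∂μ = (ε ^ 2)⁻¹ / 2)
    (hδpos : ∀ ε, 0 < ε → 0 < δ ε)
    (hδε : Tendsto (fun ε => δ ε / ε ^ 2) (nhdsWithin 0 (Set.Ioi 0)) atTop) :
    (∀ ε, 0 < ε → ∀ ω,
      |ouCondExpVal ε (δ ε) (X ε ω) - δ ε / 2|
        ≤ ε ^ 4 / 2 * (X ε ω) ^ 2 * (1 - Real.exp (-(ε ^ 2)⁻¹ * δ ε)) ^ 2
          + 3 / 2 * ε ^ 2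
          + ε ^ 2 * Real.exp (-(ε ^ 2)⁻¹ * δ ε) * (2 + Real.exp (-(ε ^ 2)⁻¹ * δ ε)) / 2) ∧
      ∃ C > 0, ∀ᶠ ε in nhdsWithin 0 (Set.Ioi 0),
        ∫ ω, |ouCondExpVal ε (δ ε) (X ε ω) - δ ε / 2| ∂μ ≤ C * ε ^ 2 := by
  have key : ∀ ε, 0 < ε → ∀ ω,
      |ouCondExpVal ε (δ ε) (X ε ω) - δ ε / 2|
        ≤ ε ^ 4 / 2 * (X ε ω) ^ 2 * (1 - Real.exp (-(ε ^ 2)⁻¹ * δ ε)) ^ 2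
          + 3 / 2 * ε ^ 2
          + ε ^ 2 * Real.exp (-(ε ^ 2)⁻¹ * δ ε) * (2 + Real.exp (-(ε ^ 2)⁻¹ * δ ε)) / 2 := by
    intro ε hε ω
    set x := X ε ω
    set e := Real.exp (-(ε ^ 2)⁻¹ * δ ε) with he
    have he0 : 0 < e := Real.exp_pos _
    have he1 : e ≤ 1 := by
      rw [he, Real.exp_le_one_iff]
      have := (hδpos ε hε).le
      have h2 : (0:ℝ) ≤ (ε ^ 2)⁻¹ := by positivity
      nlinarith
    have hsq : Real.exp (-2 * (ε ^ 2)⁻¹ * δ ε) = e ^ 2 := by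
      rw [he, ← Real.exp_nat_mul]
      ring_nf
    unfold ouCondExpVal
    rw [hsq, abs_le]
    constructor
    · nlinarith [sq_nonneg x, sq_nonneg ε, sq_nonneg (e - 1), sq_nonneg e,
        mul_nonneg (sq_nonneg ε) (sq_nonneg e),
        mul_nonneg (mul_nonneg (sq_nonneg ε) (sq_nonneg ε)) (mul_nonneg (sq_nonneg x) (sq_nonneg (e-1)))]
    · nlinarith [sq_nonneg x, sq_nonneg ε, sq_nonneg (e - 1), sq_nonneg e,
        mul_nonneg (sq_nonneg ε) (sq_nonneg e),
        mul_nonneg (sq_nonneg ε) he0.le,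
        mul_nonneg (mul_nonneg (sq_nonneg ε) (sq_nonneg ε)) (mul_nonneg (sq_nonneg x) (sq_nonneg (e-1)))]
  refine ⟨key, 13/4, by norm_num, ?_⟩
  filter_upwards [self_mem_nhdsWithin] with ε hε
  have hε' : (0:ℝ) < ε := hε
  set e := Real.exp (-(ε ^ 2)⁻¹ * δ ε) with he
  have he0 : 0 < e := Real.exp_pos _
  have he1 : e ≤ 1 := by
    rw [he, Real.exp_le_one_iff]
    have := (hδpos ε hε').le
    have h2 : (0:ℝ) ≤ (ε ^ 2)⁻¹ := by positivity
    nlinarith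
  have hint : Integrable (fun ω => (X ε ω) ^ 2) μ := by
    by_contra h
    have := hX2 ε hε'
    rw [integral_undef h] at this
    have : (0:ℝ) < (ε ^ 2)⁻¹ / 2 := by positivity
    linarith [hX2 ε hε', (integral_undef h : ∫ ω, (X ε ω) ^ 2 ∂μ = 0)]
  have hg : Integrable (fun ω => ε ^ 4 / 2 * (X ε ω) ^ 2 * (1 - e) ^ 2
      + (3 / 2 * ε ^ 2 + ε ^ 2 * e * (2 + e) / 2)) μ := by
    apply Integrable.add _ (integrable_const _)
    have : (fun ω => ε ^ 4 / 2 * (X ε ω) ^ 2 * (1 - e) ^ 2)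
        = fun ω => (ε ^ 4 / 2 * (1 - e) ^ 2) * (X ε ω) ^ 2 := by
      funext ω; ring
    rw [this]
    exact hint.const_mul _
  have hmono : ∫ ω, |ouCondExpVal ε (δ ε) (X ε ω) - δ ε / 2| ∂μ
      ≤ ∫ ω, (ε ^ 4 / 2 * (X ε ω) ^ 2 * (1 - e) ^ 2
        + (3 / 2 * ε ^ 2 + ε ^ 2 * e * (2 + e) / 2)) ∂μ := by
    apply integral_mono_of_nonneg
    · exact Filter.Eventually.of_forall fun ω => abs_nonneg _
    · exact hg
    · exact Filter.Eventually.of_forall fun ω => by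
        have := key ε hε' ω
        rw [← he] at this
        linarith
  have hval : ∫ ω, (ε ^ 4 / 2 * (X ε ω) ^ 2 * (1 - e) ^ 2
      + (3 / 2 * ε ^ 2 + ε ^ 2 * e * (2 + e) / 2)) ∂μ
      = (ε ^ 4 / 2 * (1 - e) ^ 2) * ((ε ^ 2)⁻¹ / 2)
        + (3 / 2 * ε ^ 2 + ε ^ 2 * e * (2 + e) / 2) := by
    have h1 : (fun ω => ε ^ 4 / 2 * (X ε ω) ^ 2 * (1 - e) ^ 2)
        = fun ω => (ε ^ 4 / 2 * (1 - e) ^ 2) * (X ε ω) ^ 2 := by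
      funext ω; ring
    rw [integral_add _ (integrable_const _), h1, integral_const_mul, hX2 ε hε',
      integral_const, probReal_univ]
    · simp
    · rw [h1]; exact hint.const_mul _
  refine hmono.trans (hval.le.trans ?_)
  have hε2 : ε ^ 4 * (ε ^ 2)⁻¹ = ε ^ 2 := by
    field_simp
  have expand : (ε ^ 4 / 2 * (1 - e) ^ 2) * ((ε ^ 2)⁻¹ / 2)
      = (ε ^ 4 * (ε ^ 2)⁻¹) * ((1 - e) ^ 2 / 4) := by ring
  rw [expand, hε2]
  nlinarith [sq_nonneg ε, sq_nonneg (1 - e), mul_nonneg (sq_nonneg ε) he0.le,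
    mul_nonneg (sq_nonneg ε) (mul_nonneg he0.le he0.le)]
end
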